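/- Let 0 < b < a be real numbers, let g(φ) = a + b cos φ and h(φ) = sin φ + i sin 2φ, and fix φ ∈ ℝ with h(φ) ≠ 0. Let C_φ = {(e^{2iθ} g(φ)², e^{iθ} g(φ) h(φ)) : θ ∈ ℝ} ⊆ ℂ², and let F(z,w) = z, so V = {z = 0} is disjoint from C_φ. Then R_V(C_φ) = C(C_φ): every continuous complex-valued function on the circle C_φ is a uniform limit on C_φ of functions of the form G(z,w)/zᵐ with G entire and m ∈ ℕ. -/

import Mathlib

open Complex Set
/-- `ψ` belongs to `R_V(Y)`, where `V = {F = 0}`: uniform limit on `Y` of functions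
`G/F^m` with `G` entire and `m ∈ ℕ`. -/
def MemRVAlg (F : ℂ × ℂ → ℂ) (Y : Set (ℂ × ℂ)) (ψ : ℂ × ℂ → ℂ) : Prop :=
  ∀ ε > 0, ∃ (G : ℂ × ℂ → ℂ) (m : ℕ), Differentiable ℂ G ∧
    ∀ x ∈ Y, ‖ψ x - G x / (F x) ^ m‖ < ε

/-- `g(φ) = a + b cos φ`, as a complex number. -/
noncomputable def gK (a b : ℝ) (φ : ℝ) : ℂ := ((a + b * Real.cos φ : ℝ) : ℂ)

/-- `h(φ) = sin φ + i sin 2φ`. -/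
noncomputable def hK (φ : ℝ) : ℂ := (Real.sin φ : ℂ) + Complex.I * (Real.sin (2 * φ) : ℂ)

/-- The circle `C_φ = {(e^{2iθ} g(φ)², e^{iθ} g(φ) h(φ)) : θ ∈ ℝ}`. -/
noncomputable def circleC (a b : ℝ) (φ : ℝ) : Set (ℂ × ℂ) :=
  {x | ∃ θ : ℝ, x = (Complex.exp (2 * Complex.I * (θ : ℂ)) * gK a b φ ^ 2,
    Complex.exp (Complex.I * (θ : ℂ)) * gK a b φ * hK φ)}

lemma exp_sq' (c : ℂ) : Complex.exp c ^ 2 = Complex.exp (2 * c) := by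
  rw [← Complex.exp_nat_mul]; norm_num

/-- The circle as the image of the unit circle under `u ↦ (u²g², ugh)`. -/
lemma circleC_eq_image (a b φ : ℝ) :
    circleC a b φ = (fun u : ℂ => (u ^ 2 * gK a b φ ^ 2, u * gK a b φ * hK φ)) ''
      Metric.sphere (0 : ℂ) 1 := by
  ext x
  constructor
  · rintro ⟨θ, rfl⟩
    refine ⟨Complex.exp (Complex.I * θ), by simp [Complex.norm_exp], ?_⟩
    simp only [exp_sq', mul_assoc]
  · rintro ⟨u, hu, rfl⟩
    simp only [mem_sphere_iff_norm, sub_zero] at hu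
    refine ⟨Complex.arg u, ?_⟩
    have h1 : Complex.exp (Complex.I * (Complex.arg u : ℂ)) = u := by
      rw [mul_comm, Complex.exp_mul_I]
      have := Complex.norm_mul_exp_arg_mul_I u
      rw [hu, Complex.exp_mul_I] at this
      simpa using this
    simp only [exp_sq', mul_assoc, h1]
    have h2 : Complex.exp (2 * (Complex.I * (Complex.arg u : ℂ))) = u ^ 2 := by
      rw [← exp_sq', h1]
    rw [h2]

/-- For `F(z,w) = z`, so that `V = {z = 0}` avoids `C_φ`, one has `R_V(C_φ) = C(C_φ)`:
every continuous function on the circle `C_φ` is a uniform limit on `C_φ` of functions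
`G(z,w)/zᵐ` with `G` entire and `m ∈ ℕ`. -/
theorem RV_circleC_eq_continuous (a b : ℝ) (hb : 0 < b) (hab : b < a)
    (φ : ℝ) (hφ : hK φ ≠ 0)
    (ψ : ℂ × ℂ → ℂ) (hψ : ContinuousOn ψ (circleC a b φ)) :
    MemRVAlg (fun x => x.1) (circleC a b φ) ψ := by
  set g : ℂ := gK a b φ with hgdef
  set h : ℂ := hK φ with hhdef
  set Y : Set (ℂ × ℂ) := circleC a b φ with hYdef
  -- g ≠ 0
  have hgr : (0 : ℝ) < a + b * Real.cos φ := by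
    nlinarith [Real.neg_one_le_cos φ, Real.cos_le_one φ]
  have hg : g ≠ 0 := by
    simp only [hgdef, gK, ne_eq, Complex.ofReal_eq_zero]
    exact ne_of_gt hgr
  -- membership description
  have hmem : ∀ x ∈ Y, ∃ u : ℂ, ‖u‖ = 1 ∧ x = (u ^ 2 * g ^ 2, u * g * h) := by
    intro x hx
    rw [hYdef, circleC_eq_image] at hx
    obtain ⟨u, hu, rfl⟩ := hx
    exact ⟨u, by simpa using mem_sphere_iff_norm.mp hu, rfl⟩
  have hz0 : ∀ x ∈ Y, x.1 ≠ 0 := by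
    intro x hx
    obtain ⟨u, hu, rfl⟩ := hmem x hx
    have hu0 : u ≠ 0 := by
      intro h0; rw [h0] at hu; simp at hu
    simp only [ne_eq]
    exact mul_ne_zero (pow_ne_zero _ hu0) (pow_ne_zero _ hg)
  -- compactness
  have hYc : IsCompact Y := by
    rw [hYdef, circleC_eq_image]
    exact (isCompact_sphere (0:ℂ) 1).image (by fun_prop)
  haveI : CompactSpace Y := isCompact_iff_compactSpace.mp hYc
  -- the two generating functions
  have cont1 : Continuous fun x : Y => (x : ℂ × ℂ).2 / (g * h) :=
    ((continuous_snd.comp continuous_subtype_val).div_const _)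
  have cont2 : Continuous fun x : Y => (x : ℂ × ℂ).2 * g / (h * (x : ℂ × ℂ).1) := by
    refine Continuous.div ((continuous_snd.comp continuous_subtype_val).mul continuous_const)
      (continuous_const.mul (continuous_fst.comp continuous_subtype_val)) ?_
    exact fun x => mul_ne_zero hφ (hz0 x x.2)
  set f₁ : C(Y, ℂ) := ⟨fun x => (x : ℂ × ℂ).2 / (g * h), cont1⟩ with hf₁def
  set f₂ : C(Y, ℂ) := ⟨fun x => (x : ℂ × ℂ).2 * g / (h * (x : ℂ × ℂ).1), cont2⟩ with hf₂def
  -- key pointwise facts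
  have key : ∀ x : Y, ‖f₁ x‖ = 1 ∧ f₂ x = (f₁ x)⁻¹ ∧
      (x : ℂ × ℂ) = ((f₁ x) ^ 2 * g ^ 2, f₁ x * g * h) := by
    intro x
    obtain ⟨u, hu, hxeq⟩ := hmem x x.2
    have hu0 : u ≠ 0 := by intro h0; rw [h0] at hu; simp at hu
    have e1 : f₁ x = u := by
      simp only [hf₁def, ContinuousMap.coe_mk, hxeq]
      field_simp
    have e2 : f₂ x = u⁻¹ := by
      simp only [hf₂def, ContinuousMap.coe_mk, hxeq]
      field_simp
    refine ⟨e1 ▸ hu, by rw [e1, e2], by rw [e1, hxeq]⟩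
  have star1 : star f₁ = f₂ := by
    ext x
    obtain ⟨hu, he2, _⟩ := key x
    have : f₁ x * (starRingEnd ℂ) (f₁ x) = 1 := by
      rw [Complex.mul_conj, Complex.normSq_eq_norm_sq, hu]; norm_num
    simp only [ContinuousMap.coe_star, Pi.star_apply, RCLike.star_def]
    rw [he2]
    exact eq_inv_of_mul_eq_one_right this
  have star2 : star f₂ = f₁ := by rw [← star1, star_star]
  -- the star subalgebra generated by f₁ and f₂
  set A₀ : Subalgebra ℂ C(Y, ℂ) := Algebra.adjoin ℂ {f₁, f₂} with hA₀
  have hstar : ∀ q ∈ A₀, star q ∈ A₀ := by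
    intro q hq
    induction hq using Algebra.adjoin_induction with
    | mem p hp =>
      rcases hp with hp | hp
      · rw [hp, star1]; exact Algebra.subset_adjoin (by simp)
      · rw [mem_singleton_iff.mp hp, star2]; exact Algebra.subset_adjoin (by simp)
    | algebraMap r =>
      rw [← algebraMap_star_comm]; exact Subalgebra.algebraMap_mem _ _
    | add p q _ _ hp hq => rw [star_add]; exact add_mem hp hq
    | mul p q _ _ hp hq => rw [star_mul]; exact mul_mem hq hp
  set A : StarSubalgebra ℂ C(Y, ℂ) := { A₀ with star_mem' := fun {q} hq => hstar q hq } with hA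
  -- separates points
  have hsep : A.SeparatesPoints := by
    intro x y hxy
    refine ⟨_, ⟨f₁, Algebra.subset_adjoin (by simp), rfl⟩, ?_⟩
    intro hcon
    apply hxy
    obtain ⟨_, _, hx⟩ := key x
    obtain ⟨_, _, hy⟩ := key y
    apply Subtype.ext
    rw [hx, hy]
    simp only [ContinuousMap.toFun_eq_coe] at hcon
    rw [hcon]
  have hdense := ContinuousMap.starSubalgebra_topologicalClosure_eq_top_of_separatesPoints A hsep
  -- every element of A₀ is a restriction of G / z^m
  have hP : ∀ q ∈ A₀, ∃ (G : ℂ × ℂ → ℂ) (m : ℕ), Differentiable ℂ G ∧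
      ∀ x : Y, q x = G (x : ℂ × ℂ) / ((x : ℂ × ℂ).1) ^ m := by
    intro q hq
    induction hq using Algebra.adjoin_induction with
    | mem p hp =>
      rcases hp with hp | hp
      · refine ⟨fun x => x.2 / (g * h), 0, by fun_prop, ?_⟩
        intro x
        rw [hp]
        simp [hf₁def]
      · refine ⟨fun x => x.2 * g / h, 1, by fun_prop, ?_⟩
        intro x
        rw [mem_singleton_iff.mp hp]
        simp only [hf₂def, ContinuousMap.coe_mk, pow_one, div_div]
    | algebraMap r =>
      refine ⟨fun _ => r, 0, differentiable_const _, ?_⟩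
      intro x
      simp [Algebra.algebraMap_eq_smul_one]
    | add p q hp' hq' ihp ihq =>
      obtain ⟨G₁, m₁, hG₁, e₁⟩ := ihp
      obtain ⟨G₂, m₂, hG₂, e₂⟩ := ihq
      refine ⟨fun x => G₁ x * x.1 ^ m₂ + G₂ x * x.1 ^ m₁, m₁ + m₂,
        (hG₁.mul (differentiable_fst.pow _)).add (hG₂.mul (differentiable_fst.pow _)), ?_⟩
      intro x
      have hz := hz0 x x.2
      simp only [ContinuousMap.add_apply, e₁ x, e₂ x]
      rw [div_add_div _ _ (pow_ne_zero _ hz) (pow_ne_zero _ hz), ← pow_add]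
      ring
    | mul p q hp' hq' ihp ihq =>
      obtain ⟨G₁, m₁, hG₁, e₁⟩ := ihp
      obtain ⟨G₂, m₂, hG₂, e₂⟩ := ihq
      refine ⟨fun x => G₁ x * G₂ x, m₁ + m₂, hG₁.mul hG₂, ?_⟩
      intro x
      simp only [ContinuousMap.mul_apply, e₁ x, e₂ x, pow_add]
      rw [div_mul_div_comm]
  -- conclude
  intro ε hε
  set ψX : C(Y, ℂ) := ⟨Y.restrict ψ, hψ.restrict⟩ with hψX
  have hmemc : ψX ∈ closure (A : Set C(Y, ℂ)) := by
    have : ψX ∈ A.topologicalClosure := by rw [hdense]; trivial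
    exact this
  obtain ⟨p, hpA, hpd⟩ := Metric.mem_closure_iff.mp hmemc ε hε
  obtain ⟨G, m, hG, he⟩ := hP p hpA
  refine ⟨G, m, hG, ?_⟩
  intro x hx
  have h1 : ψ x - G x / x.1 ^ m = ψX ⟨x, hx⟩ - p ⟨x, hx⟩ := by
    rw [he ⟨x, hx⟩]
    rfl
  calc ‖ψ x - G x / x.1 ^ m‖ = dist (ψX ⟨x, hx⟩) (p ⟨x, hx⟩) := by
        rw [h1, Complex.dist_eq]
    _ ≤ dist ψX p := ContinuousMap.dist_apply_le_dist _
    _ < ε := hpd
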